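/- Vanishing of the Euler characteristic for homogeneity h = 1: let n ≥ 1 and w : ℕ. Let K be the (finite) set of finitely supported functions k : ℕ → ℕ such that k 0 = 0, k j ≤ C(n−1+j, j) for every j ≥ 1, and Σ_j j·(k j) = w + Σ_j (k j) (equivalently Σ_j (j−1)·k j = w). Then Σ_{k ∈ K} (−1)^{Σ_j k j} · Π_j C( C(n−1+j, j), k j ) = 0 in ℤ. In cohomological terms: for every 1-homogeneous Poisson structure on ℝⁿ and every weight w, the alternating sum Σ_m (−1)^m dim C̄ᵐ_w of the cochain dimensions — hence the Euler characteristic of the weight-w cohomology — is zero. -/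

import Mathlib

/-- Splitting the weighted sum for a finsupp vanishing at `0`. -/
lemma aux_sum_split (k : ℕ →₀ ℕ) (h0 : k 0 = 0) :
    (k.sum fun j v => j * v)
      = (k.sum fun _ v => v) + (k.sum fun j v => (j - 1) * v) := by
  classical
  rw [Finsupp.sum, Finsupp.sum, Finsupp.sum, ← Finset.sum_add_distrib]
  refine Finset.sum_congr rfl fun j hj => ?_
  have hj0 : j ≠ 0 := by
    intro h; subst h
    exact (Finsupp.mem_support_iff.mp hj) h0
  obtain ⟨m, rfl⟩ : ∃ m, j = m + 1 := ⟨j - 1, by omega⟩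
  simp [Nat.add_mul, Nat.add_comm]

theorem euler_characteristic_zero_h_one (n : ℕ) (hn : 1 ≤ n) (w : ℕ) :
    ∃ hK : {k : ℕ →₀ ℕ | k 0 = 0 ∧ (∀ j, 1 ≤ j → k j ≤ Nat.choose (n - 1 + j) j) ∧
        (k.sum fun j v => j * v) = w + (k.sum fun _ v => v)}.Finite,
      ∑ k ∈ hK.toFinset,
        (-1 : ℤ) ^ (k.sum fun _ v => v) *
          (k.prod fun j v => (Nat.choose (Nat.choose (n - 1 + j) j) v : ℤ)) = 0 := by
  classical
  set d : ℕ → ℕ := fun j => Nat.choose (n - 1 + j) j with hd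
  have hd1 : d 1 = n := by
    simp [hd, Nat.sub_add_cancel hn]
  set K : Set (ℕ →₀ ℕ) := {k : ℕ →₀ ℕ | k 0 = 0 ∧ (∀ j, 1 ≤ j → k j ≤ d j) ∧
        (k.sum fun j v => j * v) = w + (k.sum fun _ v => v)} with hKdef
  -- members of K have reduced weight w
  have hred : ∀ k ∈ K, (k.sum fun j v => (j - 1) * v) = w := by
    intro k hk
    obtain ⟨h0, _, hc⟩ := hk
    have := aux_sum_split k h0
    omega
  -- entries beyond w+1 vanish
  have hbig : ∀ k ∈ K, ∀ j, w + 2 ≤ j → k j = 0 := by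
    intro k hk j hj
    by_contra h
    have hjs : j ∈ k.support := Finsupp.mem_support_iff.mpr h
    have hle : (j - 1) * k j ≤ ∑ i ∈ k.support, (i - 1) * k i :=
      Finset.single_le_sum (f := fun i => (i - 1) * k i) (fun i _ => Nat.zero_le _) hjs
    have hw : (∑ i ∈ k.support, (i - 1) * k i) = w := hred k hk
    have hkj : 1 ≤ k j := Nat.one_le_iff_ne_zero.mpr h
    have : (j - 1) * 1 ≤ (j - 1) * k j := Nat.mul_le_mul_left _ hkj
    omega
  -- finiteness
  have hK : K.Finite := by
    set M : ℕ →₀ ℕ := Finsupp.onFinset (Finset.range (w + 2))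
      (fun j => if j ≤ w + 1 then d j else 0)
      (by intro a ha; simp only [Finset.mem_range]; by_contra hc; push_neg at hc
          exact ha (if_neg (by omega))) with hM
    refine Set.Finite.subset (Set.finite_Iic M) ?_
    intro k hk
    rw [Set.mem_Iic, Finsupp.le_def]
    intro j
    obtain ⟨h0, hb, hc⟩ := hk
    have hkK : k ∈ K := ⟨h0, hb, hc⟩
    rcases Nat.eq_zero_or_pos j with hj | hj
    · subst hj; simp [h0]
    rcases le_or_gt j (w + 1) with hj2 | hj2
    · have hMj : M j = d j := by
        rw [hM, Finsupp.onFinset_apply, if_pos hj2]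
      rw [hMj]; exact hb j hj
    · have : k j = 0 := hbig k hkK j (by omega)
      simp [this]
  refine ⟨hK, ?_⟩
  set F := hK.toFinset with hF
  have hmemF : ∀ k, k ∈ F ↔ k ∈ K := fun k => hK.mem_toFinset
  set f : (ℕ →₀ ℕ) → ℤ := fun k =>
    (-1 : ℤ) ^ (k.sum fun _ v => v) *
      (k.prod fun j v => (Nat.choose (d j) v : ℤ)) with hf
  show ∑ k ∈ F, f k = 0
  set g : (ℕ →₀ ℕ) → (ℕ →₀ ℕ) := fun k => k.erase 1 with hg
  rw [← Finset.sum_fiberwise_of_maps_to (t := F.image g)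
    (fun k hk => Finset.mem_image_of_mem g hk) f]
  refine Finset.sum_eq_zero fun k' hk' => ?_
  -- k' comes from some k0 ∈ K
  obtain ⟨k0, hk0F, hk0e⟩ := Finset.mem_image.mp hk'
  have hk0K : k0 ∈ K := (hmemF k0).mp hk0F
  obtain ⟨h00, h0b, h0c⟩ := hk0K
  have hk'1 : k' 1 = 0 := by rw [← hk0e]; exact Finsupp.erase_same
  have hk'0 : k' 0 = 0 := by
    rw [← hk0e]
    rw [show g k0 = Finsupp.erase 1 k0 from rfl, Finsupp.erase_ne (by omega : (0:ℕ) ≠ 1)]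
    exact h00
  have hk'b : ∀ j, j ≠ 1 → k' j = k0 j := by
    intro j hj
    rw [← hk0e, show g k0 = Finsupp.erase 1 k0 from rfl, Finsupp.erase_ne hj]
  -- constraint for k'
  have hsum0 : (k0.sum fun _ v => v) = k0 1 + (k'.sum fun _ v => v) := by
    rw [← hk0e]
    exact (Finsupp.add_sum_erase' k0 1 (fun _ v => v) (fun _ => rfl)).symm
  have hsum1 : (k0.sum fun j v => j * v) = 1 * k0 1 + (k'.sum fun j v => j * v) := by
    rw [← hk0e]
    exact (Finsupp.add_sum_erase' k0 1 (fun j v => j * v) (fun _ => by simp)).symm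
  have hk'c : (k'.sum fun j v => j * v) = w + (k'.sum fun _ v => v) := by omega
  -- erase of a fiber element
  have herase : ∀ a : ℕ, Finsupp.erase 1 (k' + Finsupp.single 1 a) = k' := by
    intro a
    rw [Finsupp.erase_add, Finsupp.erase_single, add_zero]
    ext j
    rcases eq_or_ne j 1 with h | h
    · subst h; rw [Finsupp.erase_same, hk'1]
    · rw [Finsupp.erase_ne h]
  have hsumv : ∀ a : ℕ, ((k' + Finsupp.single 1 a).sum fun _ v => v)
      = (k'.sum fun _ v => v) + a := by
    intro a
    rw [Finsupp.sum_add_index' (fun _ => rfl) (fun _ _ _ => rfl),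
      Finsupp.sum_single_index rfl]
  have hsumjv : ∀ a : ℕ, ((k' + Finsupp.single 1 a).sum fun j v => j * v)
      = (k'.sum fun j v => j * v) + a := by
    intro a
    rw [Finsupp.sum_add_index' (fun i => by simp) (fun i b₁ b₂ => Nat.mul_add i b₁ b₂),
      Finsupp.sum_single_index (by simp), one_mul]
  have key : ∀ (a : ℕ), a ≤ n → (k' + Finsupp.single 1 a) ∈ K := by
    intro a ha
    refine ⟨?_, ?_, ?_⟩
    · simp [hk'0, Finsupp.single_apply]
    · intro j hj
      rcases eq_or_ne j 1 with h | h
      · subst h; simp [hk'1, hd1, ha]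
      · have h2 : Finsupp.single 1 a j = 0 := Finsupp.single_eq_of_ne' (Ne.symm h)
        show k' j + Finsupp.single 1 a j ≤ d j
        rw [h2, add_zero, hk'b j h]
        exact h0b j hj
    · rw [hsumv a, hsumjv a]; omega
  -- value of f on fiber elements
  have hval : ∀ (a : ℕ), f (k' + Finsupp.single 1 a)
      = (-1 : ℤ) ^ a * (Nat.choose n a : ℤ) *
        ((-1 : ℤ) ^ (k'.sum fun _ v => v) *
          (k'.prod fun j v => (Nat.choose (d j) v : ℤ))) := by
    intro a
    have hat1 : (k' + Finsupp.single 1 a : ℕ →₀ ℕ) 1 = a := by simp [hk'1]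
    have e2 : ((k' + Finsupp.single 1 a).prod fun j v => (Nat.choose (d j) v : ℤ))
        = (Nat.choose n a : ℤ) * (k'.prod fun j v => (Nat.choose (d j) v : ℤ)) := by
      rw [← Finsupp.mul_prod_erase' (k' + Finsupp.single 1 a) 1
        (fun j v => (Nat.choose (d j) v : ℤ)) (fun _ => by simp), herase a, hat1, hd1]
    rw [hf]
    simp only [hsumv a, e2, pow_add]
    ring
  -- reindex the fiber sum
  have hbij : ∑ k ∈ F.filter (fun k => g k = k'), f k
      = ∑ a ∈ Finset.range (n + 1), (-1 : ℤ) ^ a * (Nat.choose n a : ℤ) *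
        ((-1 : ℤ) ^ (k'.sum fun _ v => v) *
          (k'.prod fun j v => (Nat.choose (d j) v : ℤ))) := by
    refine Finset.sum_bij' (fun k _ => k 1) (fun a _ => k' + Finsupp.single 1 a)
      ?_ ?_ ?_ ?_ ?_
    · intro k hk
      rw [Finset.mem_filter] at hk
      obtain ⟨hkF, hke⟩ := hk
      obtain ⟨_, hb, _⟩ := (hmemF k).mp hkF
      have h1 := hb 1 le_rfl
      rw [hd1] at h1
      show k 1 ∈ Finset.range (n + 1)
      exact Finset.mem_range.mpr (by omega)
    · intro a ha
      rw [Finset.mem_range] at ha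
      exact Finset.mem_filter.mpr ⟨(hmemF _).mpr (key a (by omega)), herase a⟩
    · intro k hk
      rw [Finset.mem_filter] at hk
      show k' + Finsupp.single 1 (k 1) = k
      rw [← hk.2]
      show g k + Finsupp.single 1 (k 1) = k
      rw [show g k = Finsupp.erase 1 k from rfl, add_comm]
      exact Finsupp.single_add_erase 1 k
    · intro a ha
      show (k' + Finsupp.single 1 a : ℕ →₀ ℕ) 1 = a
      simp [hk'1]
    · intro k hk
      rw [Finset.mem_filter] at hk
      have hkeq : k = k' + Finsupp.single 1 (k 1) := by
        rw [← hk.2]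
        show k = g k + Finsupp.single 1 (k 1)
        rw [show g k = Finsupp.erase 1 k from rfl, add_comm]
        exact (Finsupp.single_add_erase 1 k).symm
      show f k = (-1 : ℤ) ^ (k 1) * (Nat.choose n (k 1) : ℤ) *
        ((-1 : ℤ) ^ (k'.sum fun _ v => v) *
          (k'.prod fun j v => (Nat.choose (d j) v : ℤ)))
      conv_lhs => rw [hkeq]
      exact hval (k 1)
  rw [hbij, ← Finset.sum_mul]
  rw [Int.alternating_sum_range_choose_of_ne (by omega : n ≠ 0), zero_mul]
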